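/- Let A be a Hopf algebra over ℂ with comultiplication Δ, counit ε and antipode S, let Γ be an (A,A)-bimodule, and let d : A → Γ be a ℂ-linear map satisfying the Leibniz rule d(ab) = (d a)·b + a·(d b) for all a, b ∈ A. Define ω : A → Γ by ω(a) = Σ S(a₍₁₎)·d(a₍₂₎) and the right adjoint action of A on Γ by γ ◁ a = Σ S(a₍₁₎)·γ·a₍₂₎. Then for all a, b ∈ A: ω(ab) = ω(a) ◁ b + ε(a) ω(b). -/

import Mathlib

open TensorProduct

noncomputable section

section AntipodeHelpers
open Coalgebra HopfAlgebra
variable {A : Type*} [Ring A] [HopfAlgebra ℂ A]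


lemma sum_counit_smul_right {ι : Type*} {a : A} (r : Repr ℂ a ι) :
    ∑ i ∈ r.index, counit (R := ℂ) (r.right i) • r.left i = a := by
  have h := Coalgebra.sum_tmul_counit_eq r
  apply_fun TensorProduct.rid ℂ A at h
  simp only [map_sum, TensorProduct.rid_tmul, one_smul] at h
  exact h

lemma sum_counit_smul_left {ι : Type*} {a : A} (r : Repr ℂ a ι) :
    ∑ i ∈ r.index, counit (R := ℂ) (r.left i) • r.right i = a := by
  have h := Coalgebra.sum_counit_tmul_eq r
  apply_fun TensorProduct.lid ℂ A at h
  simp only [map_sum, TensorProduct.lid_tmul, one_smul] at h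
  exact h

/-- A representation of `comul (a*b)` from representations of `comul a` and `comul b`. -/
def reprMul {ι κ : Type*} {a b : A} (ra : Repr ℂ a ι) (rb : Repr ℂ b κ) :
    Repr ℂ (a * b) (ι × κ) where
  index := ra.index ×ˢ rb.index
  left p := ra.left p.1 * rb.left p.2
  right p := ra.right p.1 * rb.right p.2
  eq := by
    rw [Bialgebra.comul_mul, ← ra.eq, ← rb.eq, Finset.sum_mul_sum]
    rw [Finset.sum_product]
    simp [Algebra.TensorProduct.tmul_mul_tmul]

/-- Coassociativity, as a rearrangement of Sweedler sums under any linear map. -/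
lemma sum_repr_assoc {M : Type*} [AddCommMonoid M] [Module ℂ M]
    (F : A ⊗[ℂ] (A ⊗[ℂ] A) →ₗ[ℂ] M) {ι : Type*} {κ Λ : ι → Type*} {a : A} (r : Repr ℂ a ι)
    (r1 : (i : ι) → Repr ℂ (r.left i) (κ i)) (r2 : (i : ι) → Repr ℂ (r.right i) (Λ i)) :
    ∑ i ∈ r.index, ∑ k ∈ (r2 i).index,
        F (r.left i ⊗ₜ ((r2 i).left k ⊗ₜ (r2 i).right k)) =
    ∑ i ∈ r.index, ∑ m ∈ (r1 i).index,
        F ((r1 i).left m ⊗ₜ ((r1 i).right m ⊗ₜ r.right i)) := by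
  have h := Coalgebra.sum_tmul_tmul_eq r r1 r2
  apply_fun F at h
  simp only [map_sum] at h
  exact h.symm

theorem antipode_mul' (a b : A) :
    antipode (R := ℂ) (a * b) = antipode (R := ℂ) b * antipode (R := ℂ) a := by
  classical
  set ra := ℛ ℂ a with hra
  set rb := ℛ ℂ b with hrb
  set ra1 : (i : ra.ι) → Repr ℂ (ra.left i) (A × A) := fun i => ℛ ℂ (ra.left i) with hra1
  set ra2 : (i : ra.ι) → Repr ℂ (ra.right i) (A × A) := fun i => ℛ ℂ (ra.right i) with hra2
  set rb1 : (j : rb.ι) → Repr ℂ (rb.left j) (A × A) := fun j => ℛ ℂ (rb.left j) with hrb1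
  set rb2 : (j : rb.ι) → Repr ℂ (rb.right j) (A × A) := fun j => ℛ ℂ (rb.right j) with hrb2
  -- Step 1
  have h1 : antipode (R := ℂ) (a * b) = ∑ i ∈ ra.index, ∑ j ∈ rb.index,
      (counit (R := ℂ) (ra.right i) * counit (R := ℂ) (rb.right j)) •
        antipode (R := ℂ) (ra.left i * rb.left j) := by
    have h := sum_counit_smul_right (reprMul ra rb)
    simp only [reprMul] at h
    rw [Finset.sum_product] at h
    conv_lhs => rw [← h]
    simp only [map_sum, map_smul, Bialgebra.counit_mul, reprMul]
  -- Step 2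
  have h2 : ∀ i ∈ ra.index, ∀ j ∈ rb.index,
      (counit (R := ℂ) (ra.right i) * counit (R := ℂ) (rb.right j)) •
          antipode (R := ℂ) (ra.left i * rb.left j)
      = ∑ k ∈ (ra2 i).index, ∑ l ∈ (rb2 j).index,
          antipode (R := ℂ) (ra.left i * rb.left j) *
            ((ra2 i).left k * ((rb2 j).left l *
              (antipode (R := ℂ) ((rb2 j).right l) * antipode (R := ℂ) ((ra2 i).right k)))) := by
    intro i _ j _
    have hb := sum_mul_antipode_eq_smul (rb2 j)
    have ha := sum_mul_antipode_eq_smul (ra2 i)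
    rw [eq_comm]
    calc ∑ k ∈ (ra2 i).index, ∑ l ∈ (rb2 j).index,
          antipode (R := ℂ) (ra.left i * rb.left j) *
            ((ra2 i).left k * ((rb2 j).left l *
              (antipode (R := ℂ) ((rb2 j).right l) * antipode (R := ℂ) ((ra2 i).right k))))
        = ∑ k ∈ (ra2 i).index,
          antipode (R := ℂ) (ra.left i * rb.left j) *
            ((ra2 i).left k *
              ((∑ l ∈ (rb2 j).index, (rb2 j).left l * antipode (R := ℂ) ((rb2 j).right l)) *
                antipode (R := ℂ) ((ra2 i).right k))) := by
          refine Finset.sum_congr rfl fun k _ => ?_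
          rw [Finset.sum_mul, Finset.mul_sum, Finset.mul_sum]
          exact Finset.sum_congr rfl fun l _ => by rw [← mul_assoc ((rb2 j).left l)]
      _ = counit (R := ℂ) (rb.right j) •
            (antipode (R := ℂ) (ra.left i * rb.left j) *
              ∑ k ∈ (ra2 i).index, (ra2 i).left k * antipode (R := ℂ) ((ra2 i).right k)) := by
          rw [hb, Finset.mul_sum]
          rw [Finset.smul_sum]
          refine Finset.sum_congr rfl fun k _ => ?_
          rw [smul_mul_assoc, one_mul, mul_smul_comm, mul_smul_comm]
      _ = (counit (R := ℂ) (ra.right i) * counit (R := ℂ) (rb.right j)) •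
            antipode (R := ℂ) (ra.left i * rb.left j) := by
          rw [ha, mul_smul_comm, mul_one, smul_smul,
            mul_comm (counit (R := ℂ) (rb.right j))]
  -- combine steps 1 and 2
  have e1 : antipode (R := ℂ) (a * b) = ∑ i ∈ ra.index, ∑ j ∈ rb.index,
      ∑ k ∈ (ra2 i).index, ∑ l ∈ (rb2 j).index,
        antipode (R := ℂ) (ra.left i * rb.left j) *
          ((ra2 i).left k * ((rb2 j).left l *
            (antipode (R := ℂ) ((rb2 j).right l) * antipode (R := ℂ) ((ra2 i).right k)))) := by
    rw [h1]
    exact Finset.sum_congr rfl fun i hi => Finset.sum_congr rfl fun j hj => h2 i hi j hj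
  -- reorder sums: i j k l → j l i k
  have e2 : antipode (R := ℂ) (a * b) = ∑ j ∈ rb.index, ∑ l ∈ (rb2 j).index,
      ∑ i ∈ ra.index, ∑ k ∈ (ra2 i).index,
        antipode (R := ℂ) (ra.left i * rb.left j) *
          ((ra2 i).left k * ((rb2 j).left l *
            (antipode (R := ℂ) ((rb2 j).right l) * antipode (R := ℂ) ((ra2 i).right k)))) := by
    rw [e1, Finset.sum_comm]
    refine Finset.sum_congr rfl fun j _ => ?_
    calc ∑ i ∈ ra.index, ∑ k ∈ (ra2 i).index, ∑ l ∈ (rb2 j).index, _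
        = ∑ i ∈ ra.index, ∑ l ∈ (rb2 j).index, ∑ k ∈ (ra2 i).index, _ :=
          Finset.sum_congr rfl fun i _ => Finset.sum_comm
      _ = _ := Finset.sum_comm
  -- coassociativity rearrangement on the a-side
  have e3 : antipode (R := ℂ) (a * b) = ∑ j ∈ rb.index, ∑ l ∈ (rb2 j).index,
      ∑ i ∈ ra.index, ∑ m ∈ (ra1 i).index,
        antipode (R := ℂ) ((ra1 i).left m * rb.left j) *
          ((ra1 i).right m * ((rb2 j).left l *
            (antipode (R := ℂ) ((rb2 j).right l) * antipode (R := ℂ) (ra.right i)))) := by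
    rw [e2]
    refine Finset.sum_congr rfl fun j _ => Finset.sum_congr rfl fun l _ => ?_
    have h := sum_repr_assoc (M := A)
      (LinearMap.mul' ℂ A ∘ₗ (LinearMap.mul' ℂ A).lTensor A ∘ₗ
        TensorProduct.map (antipode ℂ ∘ₗ LinearMap.mulRight ℂ (rb.left j))
          (TensorProduct.map LinearMap.id
            (LinearMap.mulLeft ℂ ((rb2 j).left l) ∘ₗ
              LinearMap.mulLeft ℂ (antipode (R := ℂ) ((rb2 j).right l)) ∘ₗ antipode ℂ)))
      ra ra1 ra2
    simpa using h
  -- reorder sums: j l i m → i m j l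
  have e4 : antipode (R := ℂ) (a * b) = ∑ i ∈ ra.index, ∑ m ∈ (ra1 i).index,
      ∑ j ∈ rb.index, ∑ l ∈ (rb2 j).index,
        antipode (R := ℂ) ((ra1 i).left m * rb.left j) *
          ((ra1 i).right m * ((rb2 j).left l *
            (antipode (R := ℂ) ((rb2 j).right l) * antipode (R := ℂ) (ra.right i)))) := by
    rw [e3]
    calc ∑ j ∈ rb.index, ∑ l ∈ (rb2 j).index, ∑ i ∈ ra.index, ∑ m ∈ (ra1 i).index, _
        = ∑ j ∈ rb.index, ∑ i ∈ ra.index, ∑ l ∈ (rb2 j).index, ∑ m ∈ (ra1 i).index, _ :=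
          Finset.sum_congr rfl fun j _ => Finset.sum_comm
      _ = ∑ j ∈ rb.index, ∑ i ∈ ra.index, ∑ m ∈ (ra1 i).index, ∑ l ∈ (rb2 j).index, _ :=
          Finset.sum_congr rfl fun j _ => Finset.sum_congr rfl fun i _ =>
            Finset.sum_comm
      _ = ∑ i ∈ ra.index, ∑ j ∈ rb.index, ∑ m ∈ (ra1 i).index, ∑ l ∈ (rb2 j).index, _ :=
          Finset.sum_comm
      _ = ∑ i ∈ ra.index, ∑ m ∈ (ra1 i).index, ∑ j ∈ rb.index, ∑ l ∈ (rb2 j).index, _ :=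
          Finset.sum_congr rfl fun i _ => Finset.sum_comm
  -- coassociativity rearrangement on the b-side
  have e5 : antipode (R := ℂ) (a * b) = ∑ i ∈ ra.index, ∑ m ∈ (ra1 i).index,
      ∑ j ∈ rb.index, ∑ n ∈ (rb1 j).index,
        antipode (R := ℂ) ((ra1 i).left m * (rb1 j).left n) *
          ((ra1 i).right m * ((rb1 j).right n *
            (antipode (R := ℂ) (rb.right j) * antipode (R := ℂ) (ra.right i)))) := by
    rw [e4]
    refine Finset.sum_congr rfl fun i _ => Finset.sum_congr rfl fun m _ => ?_
    have h := sum_repr_assoc (M := A)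
      (LinearMap.mul' ℂ A ∘ₗ
        TensorProduct.map (antipode ℂ ∘ₗ LinearMap.mulLeft ℂ ((ra1 i).left m))
          (LinearMap.mulLeft ℂ ((ra1 i).right m) ∘ₗ LinearMap.mul' ℂ A ∘ₗ
            TensorProduct.map LinearMap.id
              (LinearMap.mulRight ℂ (antipode (R := ℂ) (ra.right i)) ∘ₗ antipode ℂ)))
      rb rb1 rb2
    simpa using h
  -- reorder: i m j n → i j m n
  have e6 : antipode (R := ℂ) (a * b) = ∑ i ∈ ra.index, ∑ j ∈ rb.index,
      ∑ m ∈ (ra1 i).index, ∑ n ∈ (rb1 j).index,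
        antipode (R := ℂ) ((ra1 i).left m * (rb1 j).left n) *
          ((ra1 i).right m * ((rb1 j).right n *
            (antipode (R := ℂ) (rb.right j) * antipode (R := ℂ) (ra.right i)))) := by
    rw [e5]
    exact Finset.sum_congr rfl fun i _ => Finset.sum_comm
  -- contract the middle using the antipode axiom
  have e7 : antipode (R := ℂ) (a * b) = ∑ i ∈ ra.index, ∑ j ∈ rb.index,
      (counit (R := ℂ) (ra.left i) * counit (R := ℂ) (rb.left j)) •
        (antipode (R := ℂ) (rb.right j) * antipode (R := ℂ) (ra.right i)) := by
    rw [e6]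
    refine Finset.sum_congr rfl fun i _ => Finset.sum_congr rfl fun j _ => ?_
    have hc := sum_antipode_mul_eq_smul (reprMul (ra1 i) (rb1 j))
    simp only [reprMul] at hc
    rw [Finset.sum_product] at hc
    calc ∑ m ∈ (ra1 i).index, ∑ n ∈ (rb1 j).index,
          antipode (R := ℂ) ((ra1 i).left m * (rb1 j).left n) *
            ((ra1 i).right m * ((rb1 j).right n *
              (antipode (R := ℂ) (rb.right j) * antipode (R := ℂ) (ra.right i))))
        = ∑ m ∈ (ra1 i).index, ∑ n ∈ (rb1 j).index,
          (antipode (R := ℂ) ((ra1 i).left m * (rb1 j).left n) *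
            ((ra1 i).right m * (rb1 j).right n)) *
              (antipode (R := ℂ) (rb.right j) * antipode (R := ℂ) (ra.right i)) := by
          refine Finset.sum_congr rfl fun m _ => Finset.sum_congr rfl fun n _ => ?_
          rw [mul_assoc, mul_assoc]
      _ = (∑ m ∈ (ra1 i).index, ∑ n ∈ (rb1 j).index,
            antipode (R := ℂ) ((ra1 i).left m * (rb1 j).left n) *
              ((ra1 i).right m * (rb1 j).right n)) *
              (antipode (R := ℂ) (rb.right j) * antipode (R := ℂ) (ra.right i)) := by
          rw [Finset.sum_mul]
          exact Finset.sum_congr rfl fun m _ => (Finset.sum_mul _ _ _).symm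
      _ = (counit (R := ℂ) (ra.left i * rb.left j) • (1 : A)) *
              (antipode (R := ℂ) (rb.right j) * antipode (R := ℂ) (ra.right i)) := by
          rw [hc]
      _ = (counit (R := ℂ) (ra.left i) * counit (R := ℂ) (rb.left j)) •
            (antipode (R := ℂ) (rb.right j) * antipode (R := ℂ) (ra.right i)) := by
          rw [smul_mul_assoc, one_mul, Bialgebra.counit_mul]
  -- finish with the counit identities
  rw [e7]
  have hb' : ∑ j ∈ rb.index, counit (R := ℂ) (rb.left j) • antipode (R := ℂ) (rb.right j)
      = antipode (R := ℂ) b := by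
    conv_rhs => rw [← sum_counit_smul_left rb]
    rw [map_sum]
    simp only [map_smul]
  have ha' : ∑ i ∈ ra.index, counit (R := ℂ) (ra.left i) • antipode (R := ℂ) (ra.right i)
      = antipode (R := ℂ) a := by
    conv_rhs => rw [← sum_counit_smul_left ra]
    rw [map_sum]
    simp only [map_smul]
  calc ∑ i ∈ ra.index, ∑ j ∈ rb.index,
        (counit (R := ℂ) (ra.left i) * counit (R := ℂ) (rb.left j)) •
          (antipode (R := ℂ) (rb.right j) * antipode (R := ℂ) (ra.right i))
      = ∑ i ∈ ra.index, counit (R := ℂ) (ra.left i) •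
          ((∑ j ∈ rb.index, counit (R := ℂ) (rb.left j) • antipode (R := ℂ) (rb.right j)) *
            antipode (R := ℂ) (ra.right i)) := by
        refine Finset.sum_congr rfl fun i _ => ?_
        rw [Finset.sum_mul, Finset.smul_sum]
        exact Finset.sum_congr rfl fun j _ => by
          rw [mul_smul, smul_mul_assoc]
    _ = ∑ i ∈ ra.index, counit (R := ℂ) (ra.left i) •
          (antipode (R := ℂ) b * antipode (R := ℂ) (ra.right i)) := by rw [hb']
    _ = antipode (R := ℂ) b * ∑ i ∈ ra.index,
          counit (R := ℂ) (ra.left i) • antipode (R := ℂ) (ra.right i) := by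
        rw [Finset.mul_sum]
        exact Finset.sum_congr rfl fun i _ => (mul_smul_comm _ _ _).symm
    _ = antipode (R := ℂ) b * antipode (R := ℂ) a := by rw [ha']

end AntipodeHelpers
noncomputable section

variable (A : Type*) [Ring A] [HopfAlgebra ℂ A]
variable (Γ : Type*) [AddCommGroup Γ] [Module ℂ Γ]
  [Module A Γ] [Module Aᵐᵒᵖ Γ]
  [IsScalarTower ℂ A Γ] [IsScalarTower ℂ Aᵐᵒᵖ Γ]
  [SMulCommClass A Aᵐᵒᵖ Γ]

/-- The bilinear map `(x, y) ↦ S(x)·(d y)` used to define `ω(a) = Σ S(a₍₁₎)·d(a₍₂₎)`. -/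
def omegaBil (d : A →ₗ[ℂ] Γ) : A →ₗ[ℂ] A →ₗ[ℂ] Γ :=
  LinearMap.mk₂ ℂ (fun x y => HopfAlgebra.antipode (R := ℂ) x • d y)
    (fun x x' y => by simp only [map_add, add_smul])
    (fun c x y => by simp only [map_smul, smul_assoc])
    (fun x y y' => by simp only [map_add, smul_add])
    (fun c x y => by simp only [map_smul]; rw [smul_comm])

/-- `ω(a) = Σ S(a₍₁₎)·d(a₍₂₎)`. -/
def omegaFun (d : A →ₗ[ℂ] Γ) (a : A) : Γ :=
  TensorProduct.lift (omegaBil A Γ d) (Coalgebra.comul a)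

/-- The bilinear map `(x, y) ↦ S(x)·γ·y` used to define the right adjoint action. -/
def adjBil (γ : Γ) : A →ₗ[ℂ] A →ₗ[ℂ] Γ :=
  LinearMap.mk₂ ℂ (fun x y => HopfAlgebra.antipode (R := ℂ) x • (MulOpposite.op y • γ))
    (fun x x' y => by simp only [map_add, add_smul])
    (fun c x y => by simp only [map_smul, smul_assoc])
    (fun x y y' => by simp only [MulOpposite.op_add, add_smul, smul_add])
    (fun c x y => by simp only [MulOpposite.op_smul, smul_assoc]; rw [smul_comm])

/-- The right adjoint action `γ ◁ a = Σ S(a₍₁₎)·γ·a₍₂₎`. -/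
def racFun (γ : Γ) (a : A) : Γ :=
  TensorProduct.lift (adjBil A Γ γ) (Coalgebra.comul a)

/-- identity (5.2) of the paper.
For a Hopf algebra `A` over ℂ, an `(A,A)`-bimodule `Γ` (the right action is written as
an `Aᵐᵒᵖ`-action) and a ℂ-linear map `d : A → Γ` satisfying the Leibniz rule
`d(ab) = (d a)·b + a·(d b)`, the map `ω(a) = Σ S(a₍₁₎)·d(a₍₂₎)` satisfies
`ω(ab) = ω(a) ◁ b + ε(a) ω(b)`, where `γ ◁ a = Σ S(a₍₁₎)·γ·a₍₂₎`. -/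
theorem omega_mul (d : A →ₗ[ℂ] Γ)
    (hLeibniz : ∀ a b : A, d (a * b) = MulOpposite.op b • d a + a • d b) :
    ∀ a b : A,
      omegaFun A Γ d (a * b) =
        racFun A Γ (omegaFun A Γ d a) b +
          (Coalgebra.counit (R := ℂ) (A := A) a) • omegaFun A Γ d b := by
  intro a b
  classical
  set ra := Coalgebra.Repr.arbitrary ℂ a with hra
  set rb := Coalgebra.Repr.arbitrary ℂ b with hrb
  have key : ∀ (x : A) {ι : Type _} (r : Coalgebra.Repr ℂ x ι),
      omegaFun A Γ d x = ∑ i ∈ r.index,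
        HopfAlgebra.antipode (R := ℂ) (r.left i) • d (r.right i) := by
    intro x _ r
    simp only [omegaFun]
    rw [← r.eq, map_sum]
    simp [omegaBil]
  have keyr : ∀ (γ : Γ) (x : A) {ι : Type _} (r : Coalgebra.Repr ℂ x ι),
      racFun A Γ γ x = ∑ i ∈ r.index,
        HopfAlgebra.antipode (R := ℂ) (r.left i) • (MulOpposite.op (r.right i) • γ) := by
    intro γ x _ r
    simp only [racFun]
    rw [← r.eq, map_sum]
    simp [adjBil]
  rw [key (a * b) (reprMul ra rb), keyr (omegaFun A Γ d a) b rb, key a ra, key b rb]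
  simp only [reprMul]
  rw [Finset.sum_product]
  calc ∑ i ∈ ra.index, ∑ j ∈ rb.index,
        HopfAlgebra.antipode (R := ℂ) (ra.left i * rb.left j) •
          d (ra.right i * rb.right j)
      = ∑ i ∈ ra.index, ∑ j ∈ rb.index,
        (HopfAlgebra.antipode (R := ℂ) (rb.left j) •
            MulOpposite.op (rb.right j) •
              (HopfAlgebra.antipode (R := ℂ) (ra.left i) • d (ra.right i))
          + (HopfAlgebra.antipode (R := ℂ) (rb.left j) *
              (HopfAlgebra.antipode (R := ℂ) (ra.left i) * ra.right i)) •
                d (rb.right j)) := by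
        refine Finset.sum_congr rfl fun i _ => Finset.sum_congr rfl fun j _ => ?_
        rw [hLeibniz, antipode_mul', smul_add]
        congr 1
        · rw [mul_smul, smul_comm (HopfAlgebra.antipode (R := ℂ) (ra.left i))
            (MulOpposite.op (rb.right j))]
        · rw [smul_smul, mul_assoc]
    _ = (∑ j ∈ rb.index, HopfAlgebra.antipode (R := ℂ) (rb.left j) •
            MulOpposite.op (rb.right j) •
              ∑ i ∈ ra.index, HopfAlgebra.antipode (R := ℂ) (ra.left i) • d (ra.right i))
        + Coalgebra.counit (R := ℂ) (A := A) a •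
            ∑ j ∈ rb.index,
              HopfAlgebra.antipode (R := ℂ) (rb.left j) • d (rb.right j) := by
        simp only [Finset.sum_add_distrib]
        congr 1
        · rw [Finset.sum_comm]
          refine Finset.sum_congr rfl fun j _ => ?_
          rw [Finset.smul_sum, Finset.smul_sum]
        · rw [Finset.sum_comm, Finset.smul_sum]
          refine Finset.sum_congr rfl fun j _ => ?_
          rw [← Finset.sum_smul, ← Finset.mul_sum,
            HopfAlgebra.sum_antipode_mul_eq_algebraMap_counit ra,
            ← Algebra.commutes (Coalgebra.counit (R := ℂ) a)
              (HopfAlgebra.antipode (R := ℂ) (rb.left j)),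
            ← Algebra.smul_def, smul_assoc]

end
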